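/- For 0 < h < t < 1, set a = t/h and b = (1-t)/h. Then ∑_{n=0}^∞ B_k^n(t;h) = (1-h)/(t-h) for every nonnegative integer k, where B_k^n(t;h) = C(n,k) · [∏_{i=0}^{k-1}(t+ih) · ∏_{i=0}^{n-k-1}(1-t+ih)] / ∏_{i=0}^{n-1}(1+ih). -/

import Mathlib

open Finset Filter Topology

/-- The h-Bernstein polynomial (Pólya–Eggenberger probability mass function)
`B_k^n(t;h) = C(n,k)·[∏_{i<k}(t+ih)·∏_{i<n-k}(1-t+ih)] / ∏_{i<n}(1+ih)`
(it is `0` when `n < k` since then `C(n,k) = 0`). -/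
noncomputable def hBernstein (n k : ℕ) (t h : ℝ) : ℝ :=
  (n.choose k : ℝ) *
    ((∏ i ∈ Finset.range k, (t + i * h)) * ∏ i ∈ Finset.range (n - k), (1 - t + i * h)) /
    ∏ i ∈ Finset.range n, (1 + i * h)

namespace HBAux

lemma tendsto_nat_mul_of_summable {g : ℕ → ℝ} (hg0 : ∀ n, 0 ≤ g n) (n₀ : ℕ)
    (hmono : ∀ n, n₀ ≤ n → g (n + 1) ≤ g n) (hsum : Summable g) :
    Tendsto (fun n : ℕ => (n : ℝ) * g n) atTop (𝓝 0) := by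
  have hanti : ∀ a b : ℕ, n₀ ≤ a → a ≤ b → g b ≤ g a := by
    intro a b ha hab
    induction b, hab using Nat.le_induction with
    | base => exact le_refl _
    | succ b hb ih => exact le_trans (hmono b (le_trans ha hb)) ih
  set S := ∑' n, g n with hSdef
  have hS : Tendsto (fun N => ∑ i ∈ range N, g i) atTop (𝓝 S) :=
    hsum.hasSum.tendsto_sum_nat
  rw [Metric.tendsto_atTop]
  intro ε hε
  obtain ⟨N₁, hN₁⟩ := (Metric.tendsto_atTop.1 hS) (ε / 4) (by linarith)
  refine ⟨2 * (max N₁ n₀) + 2, fun n hn => ?_⟩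
  have hm1 : N₁ ≤ n / 2 := by omega
  have hm2 : n₀ ≤ n / 2 := by omega
  have htail : ∑ i ∈ Finset.Ico (n / 2) n, g i < ε / 4 := by
    have h1 : ∑ i ∈ range (n / 2), g i ≤ S := Summable.sum_le_tsum _ (fun i _ => hg0 i) hsum
    have h2 := hN₁ (n / 2) hm1
    rw [Real.dist_eq, abs_lt] at h2
    have h3 : ∑ i ∈ Finset.Ico (n / 2) n, g i
        = ∑ i ∈ range n, g i - ∑ i ∈ range (n / 2), g i := by
      rw [Finset.sum_Ico_eq_sub _ (by omega)]
    have h4 : ∑ i ∈ range n, g i ≤ S := Summable.sum_le_tsum _ (fun i _ => hg0 i) hsum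
    linarith
  have hblock : ((n - n / 2 : ℕ) : ℝ) * g n ≤ ∑ i ∈ Finset.Ico (n / 2) n, g i := by
    have : ∑ i ∈ Finset.Ico (n / 2) n, g n ≤ ∑ i ∈ Finset.Ico (n / 2) n, g i := by
      refine Finset.sum_le_sum fun i hi => ?_
      rw [Finset.mem_Ico] at hi
      exact hanti i n (le_trans hm2 hi.1) (le_of_lt hi.2)
    simpa [Finset.sum_const, Nat.card_Ico, nsmul_eq_mul] using this
  have hcard : (n : ℝ) ≤ 2 * ((n - n / 2 : ℕ) : ℝ) := by
    have h5 : n ≤ 2 * (n - n / 2) := by omega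
    calc (n:ℝ) ≤ ((2 * (n - n / 2) : ℕ) : ℝ) := by exact_mod_cast h5
    _ = 2 * ((n - n / 2 : ℕ) : ℝ) := by push_cast; ring
  have hgn : 0 ≤ g n := hg0 n
  have : (n : ℝ) * g n ≤ 2 * (ε / 4) := by
    calc (n : ℝ) * g n ≤ 2 * ((n - n / 2 : ℕ) : ℝ) * g n := by nlinarith
    _ = 2 * (((n - n / 2 : ℕ) : ℝ) * g n) := by ring
    _ ≤ 2 * (∑ i ∈ Finset.Ico (n / 2) n, g i) := by linarith
    _ ≤ 2 * (ε / 4) := by linarith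
  have hnn : 0 ≤ (n : ℝ) * g n := mul_nonneg (Nat.cast_nonneg n) hgn
  rw [Real.dist_eq, abs_of_nonneg (by simpa using hnn)]
  simp only [sub_zero]
  linarith

noncomputable def Pd (h : ℝ) (n : ℕ) : ℝ := ∏ i ∈ Finset.range n, (1 + i * h)
noncomputable def Aq (t h : ℝ) (k : ℕ) : ℝ := ∏ i ∈ Finset.range k, (t + i * h)
noncomputable def Bq (t h : ℝ) (m : ℕ) : ℝ := ∏ i ∈ Finset.range m, (1 - t + i * h)
noncomputable def Hh (t h : ℝ) (k m : ℕ) : ℝ :=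
  ((m + 1).choose (k + 1) : ℝ) * (Aq t h k * Bq t h (m - k)) / Pd h m

lemma hB_eq (n k : ℕ) (t h : ℝ) :
    hBernstein n k t h = (n.choose k : ℝ) * (Aq t h k * Bq t h (n - k)) / Pd h n := rfl

section
variable {t h : ℝ} (hh : 0 < h) (hht : h < t) (ht : t < 1)
include hh

lemma Pd_pos (n : ℕ) : 0 < Pd h n :=
  Finset.prod_pos fun i _ => by
    have : (0:ℝ) ≤ (i:ℝ) * h := mul_nonneg (Nat.cast_nonneg i) hh.le
    linarith

include hht in
lemma Aq_pos (k : ℕ) : 0 < Aq t h k :=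
  Finset.prod_pos fun i _ => by
    have : (0:ℝ) ≤ (i:ℝ) * h := mul_nonneg (Nat.cast_nonneg i) hh.le
    linarith

include ht in
lemma Bq_pos (m : ℕ) : 0 < Bq t h m :=
  Finset.prod_pos fun i _ => by
    have : (0:ℝ) ≤ (i:ℝ) * h := mul_nonneg (Nat.cast_nonneg i) hh.le
    linarith

include hht ht in
lemma hB_nonneg (n k : ℕ) : 0 ≤ hBernstein n k t h := by
  rw [hB_eq]
  have h1 := Pd_pos hh (h := h) n
  have h2 := Aq_pos hh hht k
  have h3 := Bq_pos hh ht (t := t) (n - k)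
  positivity

end

end HBAux

namespace HBAux

noncomputable def Fb (t h : ℝ) (n : ℕ) : ℝ := (1 - h + n * h) / (t - h) * hBernstein n 0 t h

section
variable {t h : ℝ} (hh : 0 < h) (hht : h < t) (ht : t < 1)
include hh hht ht

lemma key (k m : ℕ) :
    hBernstein (k + m + 1) k t h - hBernstein (k + m + 1) (k + 1) t h
      = Hh t h k (k + m + 1) - Hh t h k (k + m) := by
  rw [hB_eq, hB_eq]
  unfold Hh
  have e1 : k + m + 1 - k = m + 1 := by omega
  have e2 : k + m + 1 - (k + 1) = m := by omega
  have e3 : k + m - k = m := by omega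
  rw [e1, e2, e3]
  have eB : Bq t h (m + 1) = Bq t h m * (1 - t + m * h) := Finset.prod_range_succ _ _
  have eA : Aq t h (k + 1) = Aq t h k * (t + k * h) := Finset.prod_range_succ _ _
  have eP : Pd h (k + m + 1) = Pd h (k + m) * (1 + (k + m : ℕ) * h) :=
    Finset.prod_range_succ _ _
  have hPas : ((k + m + 1 + 1).choose (k + 1) : ℝ)
      = ((k + m + 1).choose k : ℝ) + ((k + m + 1).choose (k + 1) : ℝ) := by
    rw [Nat.choose_succ_succ (k + m + 1) k]; push_cast; ring
  rw [eB, eA, eP, hPas]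
  have hP1 : Pd h (k + m) ≠ 0 := ne_of_gt (Pd_pos hh _)
  have hP2 : (1 : ℝ) + (k + m : ℕ) * h ≠ 0 := by
    have : (0:ℝ) ≤ ((k + m : ℕ):ℝ) * h := mul_nonneg (Nat.cast_nonneg _) hh.le
    intro hc; linarith [hc]
  push_cast
  field_simp
  ring

lemma sum_diff (k N : ℕ) :
    ∑ n ∈ Finset.range (N + 1), (hBernstein n k t h - hBernstein n (k + 1) t h)
      = Hh t h k N := by
  induction N with
  | zero =>
    rw [Finset.sum_range_one]
    match k with
    | 0 => simp [hBernstein, Hh, Aq, Bq, Pd]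
    | (j+1) =>
      simp [hBernstein, Hh, Aq, Bq, Pd, Nat.choose_eq_zero_of_lt]
  | succ N ih =>
    rw [Finset.sum_range_succ, ih]
    rcases lt_trichotomy (N + 1) k with hlt | heq | hgt
    · have c1 : (N + 1).choose k = 0 := Nat.choose_eq_zero_of_lt hlt
      have c2 : (N + 1).choose (k + 1) = 0 := Nat.choose_eq_zero_of_lt (by omega)
      have c3 : (N + 1 + 1).choose (k + 1) = 0 := Nat.choose_eq_zero_of_lt (by omega)
      rw [hB_eq, hB_eq]
      unfold Hh
      rw [c1, c2, c3]
      simp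
    · subst heq
      rw [hB_eq, hB_eq]
      unfold Hh
      have c0 : (N + 1).choose (N + 1 + 1) = 0 := Nat.choose_eq_zero_of_lt (by omega)
      have c1 : (N + 1).choose (N + 1) = 1 := Nat.choose_self _
      have c2 : (N + 1 + 1).choose (N + 1 + 1) = 1 := Nat.choose_self _
      rw [c0, c1, c2, Nat.sub_self]
      simp
    · have hk : k ≤ N := by omega
      obtain ⟨m, rfl⟩ : ∃ m, N = k + m := ⟨N - k, by omega⟩
      have := key hh hht ht k m
      linarith [this]

lemma Hh_eq_f (k m : ℕ) :
    Hh t h k m = ((m : ℝ) + 1) / ((k : ℝ) + 1) * hBernstein m k t h := by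
  rw [hB_eq]
  unfold Hh
  have hnat := Nat.add_one_mul_choose_eq m k
  have hcast : ((m + 1).choose (k + 1) : ℝ) * ((k : ℝ) + 1)
      = ((m : ℝ) + 1) * (m.choose k : ℝ) := by
    have h1 : ((m + 1) * m.choose k : ℕ) = ((m + 1).choose (k + 1) * (k + 1) : ℕ) := by
      simpa [Nat.succ_eq_add_one] using hnat
    have h2 : (((m + 1) * m.choose k : ℕ) : ℝ) = (((m + 1).choose (k + 1) * (k + 1) : ℕ) : ℝ) := by
      exact_mod_cast h1
    push_cast at h2
    linarith
  have hk1 : ((k : ℝ) + 1) ≠ 0 := by positivity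
  have hC : ((m + 1).choose (k + 1) : ℝ) = ((m : ℝ) + 1) * (m.choose k : ℝ) / ((k : ℝ) + 1) := by
    rw [eq_div_iff hk1]; linarith
  rw [hC]
  ring

lemma f_anti (k n : ℕ) (hkn : k ≤ n) (hcond : (k : ℝ) * (1 - h) ≤ t * ((n : ℝ) + 1)) :
    hBernstein (n + 1) k t h ≤ hBernstein n k t h := by
  rw [hB_eq, hB_eq]
  have e1 : n + 1 - k = (n - k) + 1 := by omega
  rw [e1]
  have eB : Bq t h ((n - k) + 1) = Bq t h (n - k) * (1 - t + (n - k : ℕ) * h) :=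
    Finset.prod_range_succ _ _
  have eP : Pd h (n + 1) = Pd h n * (1 + (n : ℕ) * h) := Finset.prod_range_succ _ _
  rw [eB, eP]
  have hP : 0 < Pd h n := Pd_pos hh _
  have hn1 : (0:ℝ) < 1 + (n : ℝ) * h := by
    have : (0:ℝ) ≤ (n:ℝ) * h := mul_nonneg (Nat.cast_nonneg _) hh.le
    linarith
  have hA : 0 < Aq t h k := Aq_pos hh hht _
  have hB' : 0 < Bq t h (n - k) := Bq_pos hh ht _
  have hcnk : ((n - k : ℕ) : ℝ) = (n : ℝ) - (k : ℝ) := by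
    push_cast [Nat.cast_sub hkn]; ring
  rw [hcnk]
  rw [div_le_div_iff₀ (by positivity) (by positivity)]
  have hch : ((n + 1).choose k : ℝ) * ((n : ℝ) + 1 - (k : ℝ)) = (n.choose k : ℝ) * ((n : ℝ) + 1) := by
    have hnat := Nat.choose_mul_succ_eq n k
    have hc2 : ((n + 1 - k : ℕ) : ℝ) = (n : ℝ) + 1 - (k : ℝ) := by
      push_cast [Nat.cast_sub (by omega : k ≤ n + 1)]; ring
    have := congrArg (fun x : ℕ => (x : ℝ)) hnat
    push_cast at this
    rw [hc2] at this
    linarith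
  have hkey : ((n + 1).choose k : ℝ) * (1 - t + ((n : ℝ) - k) * h)
      ≤ (n.choose k : ℝ) * (1 + (n : ℝ) * h) := by
    have hpos : (0:ℝ) < (n : ℝ) + 1 - k := by
      have : (k:ℝ) ≤ (n:ℝ) := Nat.cast_le.2 hkn
      linarith
    rw [← mul_le_mul_iff_of_pos_right hpos]
    have hcc : (0:ℝ) ≤ (n.choose k : ℝ) := Nat.cast_nonneg _
    have e : ((n + 1).choose k : ℝ) * (1 - t + ((n : ℝ) - k) * h) * ((n : ℝ) + 1 - (k : ℝ))
        = (n.choose k : ℝ) * (((n : ℝ) + 1) * (1 - t + ((n : ℝ) - k) * h)) := by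
      linear_combination (1 - t + ((n : ℝ) - k) * h) * hch
    rw [e]
    have hscal : ((n : ℝ) + 1) * (1 - t + ((n : ℝ) - k) * h)
        ≤ (1 + (n : ℝ) * h) * ((n : ℝ) + 1 - (k : ℝ)) := by
      have hid : (1 + (n : ℝ) * h) * ((n : ℝ) + 1 - (k : ℝ))
          - ((n : ℝ) + 1) * (1 - t + ((n : ℝ) - k) * h) = t * ((n : ℝ) + 1) - (k : ℝ) * (1 - h) := by
        ring
      linarith
    calc (n.choose k : ℝ) * (((n : ℝ) + 1) * (1 - t + ((n : ℝ) - k) * h))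
        ≤ (n.choose k : ℝ) * ((1 + (n : ℝ) * h) * ((n : ℝ) + 1 - (k : ℝ))) :=
          mul_le_mul_of_nonneg_left hscal hcc
    _ = (n.choose k : ℝ) * (1 + (n : ℝ) * h) * ((n : ℝ) + 1 - (k : ℝ)) := by ring
  have hABP : (0:ℝ) ≤ Aq t h k * Bq t h (n - k) * Pd h n := by positivity
  nlinarith [mul_le_mul_of_nonneg_right hkey hABP]

lemma f0_step (n : ℕ) : hBernstein n 0 t h = Fb t h n - Fb t h (n + 1) := by
  unfold Fb
  rw [hB_eq, hB_eq]
  simp only [Nat.choose_zero_right, Nat.sub_zero, Nat.cast_one]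
  have eA : Aq t h 0 = 1 := Finset.prod_range_zero _
  have eB : Bq t h (n + 1) = Bq t h n * (1 - t + (n : ℕ) * h) := Finset.prod_range_succ _ _
  have eP : Pd h (n + 1) = Pd h n * (1 + (n : ℕ) * h) := Finset.prod_range_succ _ _
  rw [eA, eB, eP]
  have hP : Pd h n ≠ 0 := ne_of_gt (Pd_pos hh _)
  have hn1 : (1:ℝ) + (n : ℝ) * h ≠ 0 := by
    have : (0:ℝ) ≤ (n:ℝ) * h := mul_nonneg (Nat.cast_nonneg _) hh.le
    intro hc; linarith
  have hth : t - h ≠ 0 := ne_of_gt (by linarith)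
  push_cast
  field_simp
  ring

end

end HBAux

namespace HBAux


section
variable {t h : ℝ} (hh : 0 < h) (hht : h < t) (ht : t < 1)
include hh hht ht

lemma master (k : ℕ) :
    HasSum (fun n : ℕ => hBernstein n k t h) ((1 - h) / (t - h)) := by
  have hth : (0:ℝ) < t - h := by linarith
  induction k with
  | zero =>
    set f : ℕ → ℝ := fun n => hBernstein n 0 t h with hf
    have hf0 : ∀ n, 0 ≤ f n := fun n => hB_nonneg hh hht ht n 0
    have hsumform : ∀ N, ∑ n ∈ Finset.range N, f n = Fb t h 0 - Fb t h N := by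
      intro N
      rw [← Finset.sum_range_sub' (Fb t h) N]
      exact Finset.sum_congr rfl fun n _ => f0_step hh hht ht n
    have hFb0 : Fb t h 0 = (1 - h) / (t - h) := by
      unfold Fb
      rw [hB_eq]
      simp [Aq, Bq, Pd]
    have hFbnn : ∀ N, 0 ≤ Fb t h N := by
      intro N
      unfold Fb
      have h1 : (0:ℝ) ≤ 1 - h + N * h := by
        have : (0:ℝ) ≤ (N:ℝ) * h := mul_nonneg (Nat.cast_nonneg _) hh.le
        linarith
      exact mul_nonneg (div_nonneg h1 hth.le) (hf0 N)
    have hsum : Summable f := by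
      refine summable_of_sum_range_le hf0 (c := Fb t h 0) fun N => ?_
      rw [hsumform N]; linarith [hFbnn N]
    have hanti : ∀ n, 0 ≤ n → f (n + 1) ≤ f n := by
      intro n _
      refine f_anti hh hht ht 0 n (Nat.zero_le _) ?_
      have : (0:ℝ) ≤ t * ((n:ℝ) + 1) := mul_nonneg (by linarith) (by positivity)
      simpa using this
    have hmul : Tendsto (fun n : ℕ => (n : ℝ) * f n) atTop (𝓝 0) :=
      tendsto_nat_mul_of_summable hf0 0 hanti hsum
    have hterm : Tendsto f atTop (𝓝 0) := hsum.tendsto_atTop_zero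
    have hFbto : Tendsto (fun N : ℕ => Fb t h N) atTop (𝓝 0) := by
      have heq : ∀ N : ℕ, Fb t h N
          = ((1 - h) / (t - h)) * f N + (h / (t - h)) * ((N : ℝ) * f N) := by
        intro N
        unfold Fb
        have : t - h ≠ 0 := ne_of_gt hth
        field_simp
        ring
      have : Tendsto (fun N : ℕ => ((1 - h) / (t - h)) * f N
          + (h / (t - h)) * ((N : ℝ) * f N)) atTop (𝓝 (((1 - h)/(t-h)) * 0 + (h/(t-h)) * 0)) :=
        ((hterm.const_mul _)).add (hmul.const_mul _)
      simpa [heq] using this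
    rw [hasSum_iff_tendsto_nat_of_nonneg hf0]
    have : Tendsto (fun N : ℕ => Fb t h 0 - Fb t h N) atTop (𝓝 (Fb t h 0 - 0)) :=
      tendsto_const_nhds.sub hFbto
    rw [sub_zero] at this
    have h2 := this.congr fun N => (hsumform N).symm
    rwa [hFb0] at h2
  | succ k ih =>
    set g : ℕ → ℝ := fun n => hBernstein n k t h with hg
    set f : ℕ → ℝ := fun n => hBernstein n (k + 1) t h with hf
    have hf0 : ∀ n, 0 ≤ f n := fun n => hB_nonneg hh hht ht n (k + 1)
    have hg0 : ∀ n, 0 ≤ g n := fun n => hB_nonneg hh hht ht n k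
    have hsumg : Summable g := ih.summable
    obtain ⟨M, hM⟩ := exists_nat_ge ((k : ℝ) / t)
    have ht0 : (0:ℝ) < t := by linarith
    have hanti : ∀ n, k + M ≤ n → g (n + 1) ≤ g n := by
      intro n hn
      refine f_anti hh hht ht k n (by omega) ?_
      have h1 : (k:ℝ) ≤ t * M := by
        rw [div_le_iff₀ ht0] at hM
        linarith [hM]
      have h2 : (M:ℝ) ≤ (n:ℝ) + 1 := by
        have : M ≤ n + 1 := by omega
        exact_mod_cast this
      have h3 : t * (M:ℝ) ≤ t * ((n:ℝ) + 1) := by nlinarith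
      have h4 : (k:ℝ) * (1 - h) ≤ (k:ℝ) := by
        have : (0:ℝ) ≤ (k:ℝ) := Nat.cast_nonneg _
        nlinarith
      linarith
    have hmul : Tendsto (fun n : ℕ => (n : ℝ) * g n) atTop (𝓝 0) :=
      tendsto_nat_mul_of_summable hg0 (k + M) hanti hsumg
    have hterm : Tendsto g atTop (𝓝 0) := hsumg.tendsto_atTop_zero
    have hHto : Tendsto (fun N : ℕ => Hh t h k N) atTop (𝓝 0) := by
      have heq : ∀ N : ℕ, Hh t h k N
          = (1 / ((k:ℝ) + 1)) * ((N : ℝ) * g N) + (1 / ((k:ℝ) + 1)) * g N := by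
        intro N
        rw [Hh_eq_f hh hht ht k N]
        have : ((k:ℝ) + 1) ≠ 0 := by positivity
        field_simp
        ring
      have : Tendsto (fun N : ℕ => (1 / ((k:ℝ) + 1)) * ((N : ℝ) * g N)
          + (1 / ((k:ℝ) + 1)) * g N) atTop (𝓝 ((1/((k:ℝ)+1)) * 0 + (1/((k:ℝ)+1)) * 0)) :=
        (hmul.const_mul _).add (hterm.const_mul _)
      simpa [heq] using this
    have hpart : ∀ N : ℕ, ∑ n ∈ Finset.range (N + 1), f n
        = (∑ n ∈ Finset.range (N + 1), g n) - Hh t h k N := by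
      intro N
      have hsd := sum_diff hh hht ht k N
      rw [Finset.sum_sub_distrib] at hsd
      have : ∑ n ∈ Finset.range (N + 1), f n
          = (∑ n ∈ Finset.range (N + 1), g n)
            - ((∑ n ∈ Finset.range (N + 1), g n) - (∑ n ∈ Finset.range (N + 1), f n)) := by
        ring
      rw [this, hsd]
    rw [hasSum_iff_tendsto_nat_of_nonneg hf0]
    have hgs : Tendsto (fun N : ℕ => ∑ n ∈ Finset.range N, g n) atTop
        (𝓝 ((1 - h) / (t - h))) := ih.tendsto_sum_nat
    have hgs1 : Tendsto (fun N : ℕ => ∑ n ∈ Finset.range (N + 1), g n) atTop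
        (𝓝 ((1 - h) / (t - h))) := by
      exact (tendsto_add_atTop_iff_nat 1).2 hgs
    have hfs1 : Tendsto (fun N : ℕ => ∑ n ∈ Finset.range (N + 1), f n) atTop
        (𝓝 ((1 - h) / (t - h))) := by
      have : Tendsto (fun N : ℕ => (∑ n ∈ Finset.range (N + 1), g n) - Hh t h k N) atTop
          (𝓝 ((1 - h) / (t - h) - 0)) := hgs1.sub hHto
      rw [sub_zero] at this
      exact this.congr fun N => (hpart N).symm
    exact (tendsto_add_atTop_iff_nat 1).1 hfs1

end

end HBAux

/-- For `0 < h < t < 1` and every `k`, `∑_{n=0}^∞ B_k^n(t;h) = (1-h)/(t-h)`. -/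
theorem hBernstein_column_sum (t h : ℝ) (hh : 0 < h) (hht : h < t) (ht : t < 1) (k : ℕ) :
    HasSum (fun n : ℕ => hBernstein n k t h) ((1 - h) / (t - h)) :=
  HBAux.master hh hht ht k
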